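/- If 2(Π_G − Π_B) + C_B − C_G < 0, then η*(β) = (e^{β(Π_B−Π_G+C_G)} − 1)/(e^{β(Π_B−Π_G+C_G)} − 1 + e^{β(Π_G−Π_B+C_B)} − 1) tends to 1 as β → +∞; if 2(Π_G − Π_B) + C_B − C_G > 0, then η*(β) tends to 0 as β → +∞. -/

import Mathlib

open Filter Real

lemma key_ratio (b a : ℝ) (hb : 0 < b) (hba : b < a) :
    Filter.Tendsto (fun β : ℝ => (Real.exp (β * b) - 1) / (Real.exp (β * a) - 1))
      Filter.atTop (nhds 0) := by
  have ha : 0 < a := hb.trans hba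
  have hg : Tendsto (fun β : ℝ => 2 * Real.exp (β * (b - a))) atTop (nhds 0) := by
    have h1 : Tendsto (fun β : ℝ => β * (a - b)) atTop atTop :=
      Filter.tendsto_id.atTop_mul_const (by linarith)
    have h2 := (Real.tendsto_exp_neg_atTop_nhds_zero.comp h1).const_mul (2 : ℝ)
    simp only [Function.comp] at h2
    have : (fun β : ℝ => 2 * Real.exp (β * (b - a)))
        = fun β : ℝ => 2 * Real.exp (-(β * (a - b))) := by
      funext β; ring_nf
    rw [this, show (0:ℝ) = 2 * 0 by ring]
    exact h2
  apply squeeze_zero' ?_ ?_ hg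
  · filter_upwards [eventually_gt_atTop (0:ℝ)] with β hβ
    have hX : 0 < Real.exp (β * a) - 1 := by
      have : (1:ℝ) < Real.exp (β * a) := by
        rw [show (1:ℝ) = Real.exp 0 by simp]
        exact Real.exp_lt_exp.mpr (by positivity)
      linarith
    have hY : 0 ≤ Real.exp (β * b) - 1 := by
      have : (1:ℝ) ≤ Real.exp (β * b) := by
        rw [show (1:ℝ) = Real.exp 0 by simp]
        exact Real.exp_le_exp.mpr (by positivity)
      linarith
    positivity
  · filter_upwards [eventually_ge_atTop (Real.log 2 / a)] with β hβ
    have h2 : Real.exp (β * a) ≥ 2 := by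
      have : Real.log 2 ≤ β * a := by
        rw [div_le_iff₀ ha] at hβ; linarith [hβ]
      calc (2:ℝ) = Real.exp (Real.log 2) := by rw [Real.exp_log]; norm_num
        _ ≤ Real.exp (β * a) := Real.exp_le_exp.mpr this
    have hX : 0 < Real.exp (β * a) - 1 := by linarith
    have hX2 : Real.exp (β * a) / 2 ≤ Real.exp (β * a) - 1 := by linarith
    calc (Real.exp (β * b) - 1) / (Real.exp (β * a) - 1)
        ≤ Real.exp (β * b) / (Real.exp (β * a) / 2) := by
          apply div_le_div₀ (le_of_lt (Real.exp_pos _)) (by linarith) (by positivity) hX2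
      _ = 2 * Real.exp (β * (b - a)) := by
          rw [div_div_eq_mul_div, mul_comm]
          rw [show β * (b - a) = β * b - β * a by ring, Real.exp_sub]
          ring

theorem stmt11 (PB PG CB CG : ℝ) (hCB : 0 ≤ CB) (hCG : 0 ≤ CG)
    (hC : 0 < CB + CG) (h1 : PG + CB > PB) (h2 : PB > PG - CG) :
    (2 * (PG - PB) + CB - CG < 0 →
      Filter.Tendsto
        (fun β : ℝ => (Real.exp (β * (PB - PG + CG)) - 1) /
          (Real.exp (β * (PB - PG + CG)) - 1 + (Real.exp (β * (PG - PB + CB)) - 1)))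
        Filter.atTop (nhds 1)) ∧
    (2 * (PG - PB) + CB - CG > 0 →
      Filter.Tendsto
        (fun β : ℝ => (Real.exp (β * (PB - PG + CG)) - 1) /
          (Real.exp (β * (PB - PG + CG)) - 1 + (Real.exp (β * (PG - PB + CB)) - 1)))
        Filter.atTop (nhds 0)) := by
  set a := PB - PG + CG with ha_def
  set b := PG - PB + CB with hb_def
  have ha : 0 < a := by simp [ha_def]; linarith
  have hb : 0 < b := by simp [hb_def]; linarith
  have hpos : ∀ β : ℝ, 0 < β → 0 < Real.exp (β * a) - 1 ∧ 0 < Real.exp (β * b) - 1 := by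
    intro β hβ
    have ga : (1:ℝ) < Real.exp (β * a) := by
      rw [show (1:ℝ) = Real.exp 0 by simp]
      exact Real.exp_lt_exp.mpr (by positivity)
    have gb : (1:ℝ) < Real.exp (β * b) := by
      rw [show (1:ℝ) = Real.exp 0 by simp]
      exact Real.exp_lt_exp.mpr (by positivity)
    exact ⟨by linarith, by linarith⟩
  constructor
  · intro h
    have hba : b < a := by simp [ha_def, hb_def]; linarith
    have hr := key_ratio b a hb hba
    have hlim : Tendsto (fun β : ℝ =>
        1 / (1 + (Real.exp (β * b) - 1) / (Real.exp (β * a) - 1))) atTop (nhds 1) := by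
      have h0 : Tendsto (fun β : ℝ =>
          1 + (Real.exp (β * b) - 1) / (Real.exp (β * a) - 1)) atTop (nhds 1) := by
        have := (tendsto_const_nhds (x := (1:ℝ)) (f := atTop)).add hr
        simpa using this
      have := (tendsto_const_nhds (x := (1:ℝ)) (f := atTop)).div h0 (by norm_num)
      simpa [Pi.div_def] using this
    refine hlim.congr' ?_
    filter_upwards [eventually_gt_atTop (0:ℝ)] with β hβ
    obtain ⟨hX, hY⟩ := hpos β hβ
    rw [one_add_div hX.ne', one_div_div]
  · intro h
    have hab : a < b := by simp [ha_def, hb_def]; linarith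
    have hr := key_ratio a b ha hab
    have hlim : Tendsto (fun β : ℝ =>
        ((Real.exp (β * a) - 1) / (Real.exp (β * b) - 1)) /
          ((Real.exp (β * a) - 1) / (Real.exp (β * b) - 1) + 1)) atTop (nhds 0) := by
      have := hr.div (hr.add (tendsto_const_nhds (x := (1:ℝ)))) (by norm_num)
      simpa [Pi.div_def] using this
    refine hlim.congr' ?_
    filter_upwards [eventually_gt_atTop (0:ℝ)] with β hβ
    obtain ⟨hX, hY⟩ := hpos β hβ
    have hXY : 0 < Real.exp (β * a) - 1 + (Real.exp (β * b) - 1) := by linarith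
    rw [div_add_one hY.ne']
    rw [div_div_div_eq]
    rw [mul_comm (Real.exp (β * b) - 1)]
    exact mul_div_mul_right _ _ hY.ne'
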